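/- Fix R ≥ 1. There exist ρ₀ > 0 and K₀ ≥ 1, depending only on R, such that for every ℓ ∈ SL₂ with parameter vector of norm ≤ R, the map F_ℓ : SL₂ → ℝ³ given by F_ℓ(ℓ') = (A, B, C) as in the twisted-projection coefficient formula is bilipschitz with constant K₀ on the ball of radius ρ₀ around ℓ: K₀⁻¹·d(ℓ',ℓ'') ≤ |F_ℓ(ℓ') − F_ℓ(ℓ'')| ≤ K₀·d(ℓ',ℓ'') for all ℓ', ℓ'' in SL₂ within distance ρ₀ of ℓ. -/

import Mathlib

/-- The coefficient triple `(A,B,C)` of the parabola `π_{ℓ_{(a,b,c,d)}}(ℓ_{(a',b',c',d')})`. -/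
noncomputable def coeffF (a b c d a' b' c' d' : ℝ) : EuclideanSpace ℝ (Fin 3) :=
  WithLp.toLp 2 ![c * d' - d * c', a * d' - b * c' + c * b' - d * a', a * b' - b * a']

/-- SL₂ parameter vector in `ℝ⁴`. -/
noncomputable def v4 (a b c d : ℝ) : EuclideanSpace ℝ (Fin 4) := WithLp.toLp 2 ![a, b, c, d]

private lemma dist_v4 (a b c d a' b' c' d' : ℝ) :
    dist (v4 a b c d) (v4 a' b' c' d')
      = Real.sqrt ((a-a')^2+(b-b')^2+(c-c')^2+(d-d')^2) := by
  rw [v4, v4, EuclideanSpace.dist_eq]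
  congr 1
  simp [Fin.sum_univ_four, Real.dist_eq, sq_abs]

private lemma norm_v4 (a b c d : ℝ) : ‖v4 a b c d‖ = Real.sqrt (a^2+b^2+c^2+d^2) := by
  rw [v4, EuclideanSpace.norm_eq]
  congr 1
  simp [Fin.sum_univ_four, sq_abs]

private lemma dist_coeffF (a b c d a₁ b₁ c₁ d₁ a₂ b₂ c₂ d₂ : ℝ) :
    dist (coeffF a b c d a₁ b₁ c₁ d₁) (coeffF a b c d a₂ b₂ c₂ d₂)
      = Real.sqrt ((c*(d₁-d₂)-d*(c₁-c₂))^2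
          + (a*(d₁-d₂)-b*(c₁-c₂)+c*(b₁-b₂)-d*(a₁-a₂))^2
          + (a*(b₁-b₂)-b*(a₁-a₂))^2) := by
  rw [coeffF, coeffF, EuclideanSpace.dist_eq]
  congr 1
  simp only [Fin.sum_univ_three, PiLp.toLp_apply, Matrix.cons_val_zero, Matrix.cons_val_one, Matrix.head_cons,
    Matrix.cons_val_two, Matrix.tail_cons, Real.dist_eq, sq_abs]
  ring

private lemma cs4 (p₁ p₂ p₃ p₄ q₁ q₂ q₃ q₄ : ℝ) :
    (p₁*q₁+p₂*q₂+p₃*q₃+p₄*q₄)^2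
      ≤ (p₁^2+p₂^2+p₃^2+p₄^2)*(q₁^2+q₂^2+q₃^2+q₄^2) := by
  nlinarith [sq_nonneg (p₁*q₂-p₂*q₁), sq_nonneg (p₁*q₃-p₃*q₁), sq_nonneg (p₁*q₄-p₄*q₁),
    sq_nonneg (p₂*q₃-p₃*q₂), sq_nonneg (p₂*q₄-p₄*q₂), sq_nonneg (p₃*q₄-p₄*q₃)]

/-- Upper Lipschitz bound (on squares). -/
private lemma upper_sq (R a b c d x y z w : ℝ) (hR : 1 ≤ R)
    (hq : a^2+b^2+c^2+d^2 ≤ R^2) :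
    (c*w-d*z)^2 + (a*w-b*z+c*y-d*x)^2 + (a*y-b*x)^2
      ≤ (4*R^2)^2 * (x^2+y^2+z^2+w^2) := by
  have hD : (0:ℝ) ≤ x^2+y^2+z^2+w^2 := by positivity
  have h1 : (c*w-d*z)^2 ≤ (a^2+b^2+c^2+d^2)*(x^2+y^2+z^2+w^2) := by
    nlinarith [sq_nonneg (c*z+d*w), sq_nonneg a, sq_nonneg b, sq_nonneg x, sq_nonneg y,
      mul_nonneg (add_nonneg (sq_nonneg a) (sq_nonneg b)) hD]
  have h2 : (a*y-b*x)^2 ≤ (a^2+b^2+c^2+d^2)*(x^2+y^2+z^2+w^2) := by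
    nlinarith [sq_nonneg (a*x+b*y), sq_nonneg c, sq_nonneg d, sq_nonneg z, sq_nonneg w,
      mul_nonneg (add_nonneg (sq_nonneg c) (sq_nonneg d)) hD]
  have h3 : (a*w-b*z+c*y-d*x)^2 ≤ (a^2+b^2+c^2+d^2)*(x^2+y^2+z^2+w^2) := by
    nlinarith [cs4 a b c d w (-z) y (-x)]
  have hq' : (a^2+b^2+c^2+d^2)*(x^2+y^2+z^2+w^2) ≤ R^2*(x^2+y^2+z^2+w^2) :=
    mul_le_mul_of_nonneg_right hq hD
  have hR2 : (1:ℝ) ≤ R^2 := one_le_pow₀ hR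
  nlinarith [mul_le_mul_of_nonneg_right hR2 (mul_nonneg (sq_nonneg R) hD)]



private lemma ekey (e s₁ s₂ M : ℝ) (h : 2*e = -(s₁+s₂)) (h1 : s₁^2 ≤ M) (h2 : s₂^2 ≤ M) :
    e^2 ≤ M := by
  have h4 : 4*e^2 = (s₁+s₂)^2 := by linear_combination (2*e - s₁ - s₂)*h
  nlinarith [sq_nonneg (s₁-s₂), h4, h1, h2]

private lemma repkey (x a c C Q : ℝ) (h : x = c*C - a*Q) :
    x^2 ≤ 2*c^2*C^2 + 2*a^2*Q^2 := by
  nlinarith [sq_nonneg (c*C+a*Q), congrArg (fun t => t^2) h]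

private lemma finalkey (R D2 A B C e P Q : ℝ)
    (hrep : D2 ≤ 2*R^2*(C^2 + Q^2 + A^2 + P^2))
    (hPQ : R^2*(Q^2+P^2) = R^2*((B^2+e^2)/2))
    (he2 : 4*(R^2*e^2) ≤ D2)
    (hmono : R^2*A^2 + R^2*B^2 + R^2*C^2 ≤ R^4*A^2 + R^4*B^2 + R^4*C^2)
    (hE2 : 0 ≤ R^4*A^2 + R^4*B^2 + R^4*C^2) :
    D2 ≤ (4*R^2)^2*(A^2+B^2+C^2) := by
  have hexp : (4*R^2)^2*(A^2+B^2+C^2) = 16*(R^4*A^2 + R^4*B^2 + R^4*C^2) := by ring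
  rw [hexp]
  nlinarith [hrep, hPQ, he2, hmono, hE2]

set_option maxHeartbeats 1000000 in
private lemma lower_sq (R a b c d a₁ b₁ c₁ d₁ a₂ b₂ c₂ d₂ : ℝ) (hR : 1 ≤ R)
    (hdet : a*d-b*c = 1) (h1 : a₁*d₁-b₁*c₁ = 1) (h2 : a₂*d₂-b₂*c₂ = 1)
    (hq : a^2+b^2+c^2+d^2 ≤ R^2)
    (hu1 : (a₁-a)^2+(b₁-b)^2+(c₁-c)^2+(d₁-d)^2 ≤ (1/(2*R))^2)
    (hu2 : (a₂-a)^2+(b₂-b)^2+(c₂-c)^2+(d₂-d)^2 ≤ (1/(2*R))^2) :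
    (a₁-a₂)^2+(b₁-b₂)^2+(c₁-c₂)^2+(d₁-d₂)^2
      ≤ (4*R^2)^2 * ((c*(d₁-d₂)-d*(c₁-c₂))^2
          + (a*(d₁-d₂)-b*(c₁-c₂)+c*(b₁-b₂)-d*(a₁-a₂))^2
          + (a*(b₁-b₂)-b*(a₁-a₂))^2) := by
  have hR0 : (0:ℝ) < R := lt_of_lt_of_le one_pos hR
  obtain ⟨x, hxd⟩ : ∃ t, t = a₁-a₂ := ⟨_, rfl⟩
  obtain ⟨y, hyd⟩ : ∃ t, t = b₁-b₂ := ⟨_, rfl⟩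
  obtain ⟨z, hzd⟩ : ∃ t, t = c₁-c₂ := ⟨_, rfl⟩
  obtain ⟨w, hwd⟩ : ∃ t, t = d₁-d₂ := ⟨_, rfl⟩
  obtain ⟨A2, hA2d⟩ : ∃ t, t = c*w-d*z := ⟨_, rfl⟩
  obtain ⟨C2, hC2d⟩ : ∃ t, t = a*y-b*x := ⟨_, rfl⟩
  obtain ⟨B2, hB2d⟩ : ∃ t, t = a*w-b*z+c*y-d*x := ⟨_, rfl⟩
  have hgoal : (a₁-a₂)^2+(b₁-b₂)^2+(c₁-c₂)^2+(d₁-d₂)^2 = x^2+y^2+z^2+w^2 := by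
    rw [hxd, hyd, hzd, hwd]
  have hgoal2 : (c*(d₁-d₂)-d*(c₁-c₂))^2
          + (a*(d₁-d₂)-b*(c₁-c₂)+c*(b₁-b₂)-d*(a₁-a₂))^2
          + (a*(b₁-b₂)-b*(a₁-a₂))^2 = A2^2 + B2^2 + C2^2 := by
    rw [hA2d, hB2d, hC2d, hxd, hyd, hzd, hwd]
  rw [hgoal, hgoal2]
  obtain ⟨P, hPd⟩ : ∃ t, t = a*w-b*z := ⟨_, rfl⟩
  obtain ⟨Q, hQd⟩ : ∃ t, t = c*y-d*x := ⟨_, rfl⟩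
  obtain ⟨e, hed⟩ : ∃ t, t = d*x-c*y-b*z+a*w := ⟨_, rfl⟩
  obtain ⟨s₁, hs1d⟩ : ∃ t, t = (a₁-a)*w - (b₁-b)*z - (c₁-c)*y + (d₁-d)*x := ⟨_, rfl⟩
  obtain ⟨s₂, hs2d⟩ : ∃ t, t = (a₂-a)*w - (b₂-b)*z - (c₂-c)*y + (d₂-d)*x := ⟨_, rfl⟩
  obtain ⟨D2, hD2d⟩ : ∃ t, t = x^2+y^2+z^2+w^2 := ⟨_, rfl⟩
  rw [← hD2d]
  have hD2 : (0:ℝ) ≤ D2 := by rw [hD2d, hxd, hyd, hzd, hwd]; positivity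
  -- key identity from the two determinant conditions
  have he : 2*e = -(s₁+s₂) := by
    rw [hed, hs1d, hs2d, hxd, hyd, hzd, hwd]
    linear_combination 2*h1 - 2*h2
  -- Cauchy–Schwarz for both perturbation vectors
  have hcs1 : s₁^2 ≤ (1/(2*R))^2 * D2 := by
    have hcs := cs4 (a₁-a) (b₁-b) (c₁-c) (d₁-d) w (-z) (-y) x
    have e1 : ((a₁-a)*w + (b₁-b)*(-z) + (c₁-c)*(-y) + (d₁-d)*x)^2 = s₁^2 := by
      rw [hs1d]; ring
    have e2 : (w^2+(-z)^2+(-y)^2+x^2) = D2 := by rw [hD2d]; ring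
    rw [e1, e2] at hcs
    exact hcs.trans (mul_le_mul_of_nonneg_right hu1 hD2)
  have hcs2 : s₂^2 ≤ (1/(2*R))^2 * D2 := by
    have hcs := cs4 (a₂-a) (b₂-b) (c₂-c) (d₂-d) w (-z) (-y) x
    have e1 : ((a₂-a)*w + (b₂-b)*(-z) + (c₂-c)*(-y) + (d₂-d)*x)^2 = s₂^2 := by
      rw [hs2d]; ring
    have e2 : (w^2+(-z)^2+(-y)^2+x^2) = D2 := by rw [hD2d]; ring
    rw [e1, e2] at hcs
    exact hcs.trans (mul_le_mul_of_nonneg_right hu2 hD2)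
  -- bound on e²
  have hkey : e^2 ≤ (1/(2*R))^2 * D2 := ekey e s₁ s₂ _ he hcs1 hcs2
  have he2 : 4*(R^2*e^2) ≤ D2 := by
    have h4 : 4*R^2*((1/(2*R))^2 * D2) = D2 := by field_simp; ring
    calc 4*(R^2*e^2) = 4*R^2*e^2 := by ring
      _ ≤ 4*R^2*((1/(2*R))^2 * D2) := by
          apply mul_le_mul_of_nonneg_left hkey (by positivity)
      _ = D2 := h4
  -- representation identities
  have hx' : x = c*C2 - a*Q := by
    rw [hC2d, hQd]; linear_combination (-x)*hdet
  have hy' : y = d*C2 - b*Q := by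
    rw [hC2d, hQd]; linear_combination (-y)*hdet
  have hz' : z = c*P - a*A2 := by
    rw [hA2d, hPd]; linear_combination (-z)*hdet
  have hw' : w = d*P - b*A2 := by
    rw [hA2d, hPd]; linear_combination (-w)*hdet
  have hx2 := repkey x a c C2 Q hx'
  have hy2 := repkey y b d C2 Q hy'
  have hz2 := repkey z a c P A2 hz'
  have hw2 := repkey w b d P A2 hw'
  have hcd : c^2+d^2 ≤ R^2 := by linarith only [hq, sq_nonneg a, sq_nonneg b]
  have hab : a^2+b^2 ≤ R^2 := by linarith only [hq, sq_nonneg c, sq_nonneg d]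
  have m1 : (c^2+d^2)*C2^2 ≤ R^2*C2^2 := mul_le_mul_of_nonneg_right hcd (sq_nonneg C2)
  have m2 : (a^2+b^2)*Q^2 ≤ R^2*Q^2 := mul_le_mul_of_nonneg_right hab (sq_nonneg Q)
  have m3 : (a^2+b^2)*A2^2 ≤ R^2*A2^2 := mul_le_mul_of_nonneg_right hab (sq_nonneg A2)
  have m4 : (c^2+d^2)*P^2 ≤ R^2*P^2 := mul_le_mul_of_nonneg_right hcd (sq_nonneg P)
  have hrep : D2 ≤ 2*R^2*(C2^2 + Q^2 + A2^2 + P^2) := by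
    have hD2e : D2 = x^2+y^2+z^2+w^2 := hD2d
    have expand : 2*R^2*(C2^2 + Q^2 + A2^2 + P^2)
        = 2*(R^2*C2^2) + 2*(R^2*Q^2) + 2*(R^2*A2^2) + 2*(R^2*P^2) := by ring
    rw [hD2e, expand]
    linarith only [hx2, hy2, hz2, hw2, m1, m2, m3, m4]
  have hB : B2 = P + Q := by rw [hB2d, hPd, hQd]; ring
  have hePQ : e = P - Q := by rw [hed, hPd, hQd]; ring
  have hPQ : R^2*(Q^2 + P^2) = R^2*((B2^2 + e^2)/2) := by rw [hB, hePQ]; ring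
  have hR4 : R^2 ≤ R^4 := by
    have h1 : (1:ℝ) ≤ R^2 := one_le_pow₀ hR
    calc R^2 = R^2 * 1 := by ring
      _ ≤ R^2 * R^2 := mul_le_mul_of_nonneg_left h1 (sq_nonneg R)
      _ = R^4 := by ring
  have hmono : R^2*A2^2 + R^2*B2^2 + R^2*C2^2 ≤ R^4*A2^2 + R^4*B2^2 + R^4*C2^2 := by
    have h := mul_le_mul_of_nonneg_right hR4 (by positivity : (0:ℝ) ≤ A2^2+B2^2+C2^2)
    linarith only [h]
  have hE2 : (0:ℝ) ≤ R^4*A2^2 + R^4*B2^2 + R^4*C2^2 := by positivity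
  exact finalkey R D2 A2 B2 C2 e P Q hrep hPQ he2 hmono hE2


/-- There are `ρ₀ > 0` and `K₀ ≥ 1` depending only on `R` such that for each `ℓ ∈ SL₂`
with parameter vector of norm `≤ R`, the map `F_ℓ(ℓ') = (A,B,C)` is bilipschitz with
constant `K₀` on the ball of radius `ρ₀` around `ℓ` in `SL₂`. -/
theorem stmt12 (R : ℝ) (hR : 1 ≤ R) :
    ∃ ρ₀ > 0, ∃ K₀ : ℝ, 1 ≤ K₀ ∧
    ∀ a b c d : ℝ, a * d - b * c = 1 → ‖v4 a b c d‖ ≤ R →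
    ∀ a₁ b₁ c₁ d₁ a₂ b₂ c₂ d₂ : ℝ,
      a₁ * d₁ - b₁ * c₁ = 1 → a₂ * d₂ - b₂ * c₂ = 1 →
      dist (v4 a₁ b₁ c₁ d₁) (v4 a b c d) ≤ ρ₀ →
      dist (v4 a₂ b₂ c₂ d₂) (v4 a b c d) ≤ ρ₀ →
      K₀⁻¹ * dist (v4 a₁ b₁ c₁ d₁) (v4 a₂ b₂ c₂ d₂)
          ≤ dist (coeffF a b c d a₁ b₁ c₁ d₁) (coeffF a b c d a₂ b₂ c₂ d₂) ∧
      dist (coeffF a b c d a₁ b₁ c₁ d₁) (coeffF a b c d a₂ b₂ c₂ d₂)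
          ≤ K₀ * dist (v4 a₁ b₁ c₁ d₁) (v4 a₂ b₂ c₂ d₂) := by
  have hR0 : (0:ℝ) < R := lt_of_lt_of_le one_pos hR
  have hK0 : (0:ℝ) < 4*R^2 := by positivity
  have hR2 : (1:ℝ) ≤ R^2 := one_le_pow₀ hR
  refine ⟨1/(2*R), by positivity, 4*R^2, by linarith only [hR2], ?_⟩
  intro a b c d hdet hnorm a₁ b₁ c₁ d₁ a₂ b₂ c₂ d₂ h1 h2 hd1 hd2
  have hq : a^2+b^2+c^2+d^2 ≤ R^2 := by
    rw [norm_v4] at hnorm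
    calc a^2+b^2+c^2+d^2 = Real.sqrt (a^2+b^2+c^2+d^2) ^ 2 :=
          (Real.sq_sqrt (by positivity)).symm
      _ ≤ R^2 := pow_le_pow_left₀ (Real.sqrt_nonneg _) hnorm 2
  have hu1 : (a₁-a)^2+(b₁-b)^2+(c₁-c)^2+(d₁-d)^2 ≤ (1/(2*R))^2 := by
    rw [dist_v4] at hd1
    calc (a₁-a)^2+(b₁-b)^2+(c₁-c)^2+(d₁-d)^2
        = Real.sqrt ((a₁-a)^2+(b₁-b)^2+(c₁-c)^2+(d₁-d)^2) ^ 2 :=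
          (Real.sq_sqrt (by positivity)).symm
      _ ≤ (1/(2*R))^2 := pow_le_pow_left₀ (Real.sqrt_nonneg _) hd1 2
  have hu2 : (a₂-a)^2+(b₂-b)^2+(c₂-c)^2+(d₂-d)^2 ≤ (1/(2*R))^2 := by
    rw [dist_v4] at hd2
    calc (a₂-a)^2+(b₂-b)^2+(c₂-c)^2+(d₂-d)^2
        = Real.sqrt ((a₂-a)^2+(b₂-b)^2+(c₂-c)^2+(d₂-d)^2) ^ 2 :=
          (Real.sq_sqrt (by positivity)).symm
      _ ≤ (1/(2*R))^2 := pow_le_pow_left₀ (Real.sqrt_nonneg _) hd2 2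
  rw [dist_coeffF, dist_v4]
  constructor
  · rw [inv_mul_le_iff₀ hK0]
    have hle := lower_sq R a b c d a₁ b₁ c₁ d₁ a₂ b₂ c₂ d₂ hR hdet h1 h2 hq hu1 hu2
    calc Real.sqrt ((a₁-a₂)^2+(b₁-b₂)^2+(c₁-c₂)^2+(d₁-d₂)^2)
        ≤ Real.sqrt ((4*R^2)^2 * ((c*(d₁-d₂)-d*(c₁-c₂))^2
            + (a*(d₁-d₂)-b*(c₁-c₂)+c*(b₁-b₂)-d*(a₁-a₂))^2
            + (a*(b₁-b₂)-b*(a₁-a₂))^2)) := Real.sqrt_le_sqrt hle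
      _ = 4*R^2 * Real.sqrt ((c*(d₁-d₂)-d*(c₁-c₂))^2
            + (a*(d₁-d₂)-b*(c₁-c₂)+c*(b₁-b₂)-d*(a₁-a₂))^2
            + (a*(b₁-b₂)-b*(a₁-a₂))^2) := by
          rw [Real.sqrt_mul (by positivity), Real.sqrt_sq (by positivity)]
  · have hle := upper_sq R a b c d (a₁-a₂) (b₁-b₂) (c₁-c₂) (d₁-d₂) hR hq
    calc Real.sqrt ((c*(d₁-d₂)-d*(c₁-c₂))^2
            + (a*(d₁-d₂)-b*(c₁-c₂)+c*(b₁-b₂)-d*(a₁-a₂))^2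
            + (a*(b₁-b₂)-b*(a₁-a₂))^2)
        ≤ Real.sqrt ((4*R^2)^2 * ((a₁-a₂)^2+(b₁-b₂)^2+(c₁-c₂)^2+(d₁-d₂)^2)) :=
          Real.sqrt_le_sqrt hle
      _ = 4*R^2 * Real.sqrt ((a₁-a₂)^2+(b₁-b₂)^2+(c₁-c₂)^2+(d₁-d₂)^2) := by
          rw [Real.sqrt_mul (by positivity), Real.sqrt_sq (by positivity)]
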